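/- There exists a function f : ℕ → ℝ whose time-scale symmetric derivative on ℕ (given at each point n ≥ 1 by (f(n+1) - f(n-1))/2) is strictly positive at every n ≥ 1, yet f is not monotone increasing. -/
import Mathlib


theorem exists_pos_symDeriv_not_monotone :
    ∃ f : ℕ → ℝ, (∀ n : ℕ, 1 ≤ n → 0 < (f (n + 1) - f (n - 1)) / 2) ∧ ¬ Monotone f := by
  refine ⟨fun n => if n % 2 = 0 then 10 * n else n, ?_, ?_⟩
  · rintro (_ | m) hn
    · omega
    have h1 : m + 1 - 1 = m := rfl
    have h2 : m + 1 + 1 = m + 2 := rfl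
    rw [h1, h2]
    rcases Nat.even_or_odd m with hm | hm <;> [rw [Nat.even_iff] at hm; rw [Nat.odd_iff] at hm]
    · have e1 : (m + 2) % 2 = 0 := by omega
      have e2 : m % 2 = 0 := by omega
      simp only [e1, e2, if_pos rfl]
      push_cast
      linarith
    · have e1 : (m + 2) % 2 = 1 := by omega
      have e2 : m % 2 = 1 := by omega
      simp only [e1, e2]
      norm_num
  · intro h
    have := h (show (2:ℕ) ≤ 3 by norm_num)
    norm_num at this
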